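/- Let G be a finite connected simple graph such that for every pair of adjacent vertices i and j, either N[i] ⊆ N[j] or N[j] ⊆ N[i]. Let T be the quotient of the vertex set by the equivalence relation N[i] = N[j], partially ordered by ū ⪯ v̄ ⇔ N[v] ⊆ N[u] (well defined on classes). Then: (a) T has a minimum element; (b) for every u ∈ T, the set {v ∈ T : v ⪯ u} is totally ordered by ⪯ (so the Hasse diagram of T is a rooted tree whose root is the minimum); and (c) no element of T is covered by exactly one element, i.e., for every u ∈ T the number of v ∈ T covering u is not equal to one. -/

import Mathlib

open SimpleGraph

noncomputable section

/-- The closed neighborhood `N[i] = {i} ∪ {j : j ~ i}`. -/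
def closedNbhd {V : Type*} (G : SimpleGraph V) (i : V) : Set V :=
  insert i (G.neighborSet i)

/-- The equivalence relation `N[i] = N[j]` on the vertices. -/
def nbhdSetoid {V : Type*} (G : SimpleGraph V) : Setoid V :=
  ⟨fun i j => closedNbhd G i = closedNbhd G j,
   ⟨fun _ => rfl, fun h => h.symm, fun h₁ h₂ => h₁.trans h₂⟩⟩

/-- The quotient `T = V / R`. -/
def HasseT {V : Type*} (G : SimpleGraph V) : Type _ := Quotient (nbhdSetoid G)

/-- The partial order `ū ⪯ v̄ ⇔ N[v] ⊆ N[u]` on `T`. -/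
def leT {V : Type*} (G : SimpleGraph V) : HasseT G → HasseT G → Prop :=
  Quotient.lift₂ (fun i j => closedNbhd G j ⊆ closedNbhd G i)
    (fun a b a' b' ha hb => by
      have h1 : closedNbhd G a = closedNbhd G a' := ha
      have h2 : closedNbhd G b = closedNbhd G b' := hb
      simp [h1, h2])

/-- The strict order on `T`. -/
def ltT {V : Type*} (G : SimpleGraph V) (u v : HasseT G) : Prop :=
  leT G u v ∧ ¬ leT G v u

/-- `v` covers `u` in `T`. -/
def covT {V : Type*} (G : SimpleGraph V) (u v : HasseT G) : Prop :=
  ltT G u v ∧ ∀ w : HasseT G, ltT G u w → ltT G w v → False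

section Aux

variable {V : Type*} (G : SimpleGraph V)

lemma closed_mem_self (i : V) : i ∈ closedNbhd G i := Set.mem_insert _ _

lemma closed_mem_iff {i j : V} : i ∈ closedNbhd G j ↔ i = j ∨ G.Adj j i := by
  simp [closedNbhd]

lemma closed_mem_comm {i j : V} : i ∈ closedNbhd G j ↔ j ∈ closedNbhd G i := by
  simp only [closed_mem_iff]
  constructor
  · rintro (rfl | h)
    · exact Or.inl rfl
    · exact Or.inr h.symm
  · rintro (rfl | h)
    · exact Or.inl rfl
    · exact Or.inr h.symm

lemma leT_mk {a b : V} :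
    leT G (Quotient.mk (nbhdSetoid G) a) (Quotient.mk (nbhdSetoid G) b) ↔
      closedNbhd G b ⊆ closedNbhd G a := Iff.rfl

lemma leT_refl (u : HasseT G) : leT G u u := by
  induction u using Quotient.ind with
  | _ a => exact subset_rfl

lemma leT_trans {u v w : HasseT G} (h1 : leT G u v) (h2 : leT G v w) : leT G u w := by
  induction u using Quotient.ind with
  | _ a =>
  induction v using Quotient.ind with
  | _ b =>
  induction w using Quotient.ind with
  | _ c =>
  exact Set.Subset.trans h2 h1

/-- The size of the closed neighborhood, as a function on the quotient. -/
def fT : HasseT G → ℕ :=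
  Quotient.lift (fun i => (closedNbhd G i).ncard)
    (fun a b h => by rw [show closedNbhd G a = closedNbhd G b from h])

lemma fT_lt_of_ltT [Fintype V] {u w : HasseT G} (h : ltT G u w) : fT G w < fT G u := by
  induction u using Quotient.ind with
  | _ a =>
  induction w using Quotient.ind with
  | _ b =>
  exact Set.ncard_lt_ncard ⟨h.1, h.2⟩ (Set.toFinite _)

lemma exists_cov_le [Fintype V] {u w : HasseT G} (h : ltT G u w) :
    ∃ v : HasseT G, covT G u v ∧ leT G v w := by
  haveI : Finite (HasseT G) := Quotient.finite _
  have hfin : ({z : HasseT G | ltT G u z ∧ leT G z w}).Finite := Set.toFinite _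
  obtain ⟨z, hzS, hzmax⟩ :=
    Set.exists_max_image {z : HasseT G | ltT G u z ∧ leT G z w} (fT G) hfin
      ⟨w, h, leT_refl G w⟩
  refine ⟨z, ⟨hzS.1, ?_⟩, hzS.2⟩
  intro y hy hyz
  have hyS : y ∈ {z : HasseT G | ltT G u z ∧ leT G z w} :=
    ⟨hy, leT_trans G hyz.1 hzS.2⟩
  exact absurd (fT_lt_of_ltT G hyz) (not_lt.2 (hzmax y hyS))

end Aux

theorem statement4 {V : Type*} [Fintype V] (G : SimpleGraph V) (hconn : G.Connected)
    (hhom : ∀ i j : V, G.Adj i j →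
      (closedNbhd G i ⊆ closedNbhd G j ∨ closedNbhd G j ⊆ closedNbhd G i)) :
    (∃ m : HasseT G, ∀ u : HasseT G, leT G m u) ∧
    (∀ u v w : HasseT G, leT G v u → leT G w u → (leT G v w ∨ leT G w v)) ∧
    (∀ u : HasseT G, Nat.card {v : HasseT G // covT G u v} ≠ 1) := by
  refine ⟨?_, ?_, ?_⟩
  · -- (a) minimum element
    haveI : Nonempty V := hconn.nonempty
    obtain ⟨m, hm⟩ := Finite.exists_max (fun v : V => (closedNbhd G v).ncard)
    have step : ∀ a b : V, G.Adj a b → closedNbhd G a ⊆ closedNbhd G m →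
        closedNbhd G b ⊆ closedNbhd G m := by
      intro a b hab ha
      have hb : b ∈ closedNbhd G m := ha ((closed_mem_iff G).mpr (Or.inr hab))
      rcases (closed_mem_iff G).mp hb with rfl | hbm
      · exact subset_rfl
      · rcases hhom b m hbm.symm with h | h
        · exact h
        · have heq : closedNbhd G m = closedNbhd G b :=
            Set.eq_of_subset_of_ncard_le h (hm b) (Set.toFinite _)
          exact heq.ge
    have walkstep : ∀ (a b : V) (p : G.Walk a b),
        closedNbhd G a ⊆ closedNbhd G m → closedNbhd G b ⊆ closedNbhd G m := by
      intro a b p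
      induction p with
      | nil => exact id
      | cons h q ih => exact fun ha => ih (step _ _ h ha)
    refine ⟨Quotient.mk (nbhdSetoid G) m, ?_⟩
    intro u
    induction u using Quotient.ind with
    | _ w =>
    exact walkstep m w (hconn.preconnected m w).some subset_rfl
  · -- (b) total order below any element
    intro u v w huv huw
    induction u using Quotient.ind with
    | _ i =>
    induction v using Quotient.ind with
    | _ j =>
    induction w using Quotient.ind with
    | _ k =>
    have hij : closedNbhd G i ⊆ closedNbhd G j := huv
    have hik : closedNbhd G i ⊆ closedNbhd G k := huw
    have hji : j ∈ closedNbhd G i := (closed_mem_comm G).mp (hij (closed_mem_self G i))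
    have hjk : j ∈ closedNbhd G k := hik hji
    rcases (closed_mem_iff G).mp hjk with rfl | hadj
    · exact Or.inl subset_rfl
    · rcases hhom j k hadj.symm with h | h
      · exact Or.inr h
      · exact Or.inl h
  · -- (c) no element covered by exactly one element
    intro u hcard
    induction u using Quotient.ind with
    | _ i =>
    rw [Nat.card_eq_one_iff_exists] at hcard
    obtain ⟨⟨v, hv⟩, huniq⟩ := hcard
    induction v using Quotient.ind with
    | _ j =>
    have hlt : ltT G (Quotient.mk (nbhdSetoid G) i) (Quotient.mk (nbhdSetoid G) j) := hv.1
    have hsub : closedNbhd G j ⊆ closedNbhd G i := hlt.1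
    have hji : j ∈ closedNbhd G i := hsub (closed_mem_self G j)
    have hij : i ∈ closedNbhd G j := by
      rcases (closed_mem_iff G).mp hji with rfl | hadj
      · exact absurd subset_rfl hlt.2
      · exact (closed_mem_comm G).mp hji
    obtain ⟨x, hxu, hxv⟩ := Set.exists_of_ssubset
      (show closedNbhd G j ⊂ closedNbhd G i from ⟨hsub, fun h => hlt.2 h⟩)
    have hxi : x ≠ i := fun h => hxv (h ▸ hij)
    have hadj : G.Adj i x := by
      rcases (closed_mem_iff G).mp hxu with h | h
      · exact absurd h hxi
      · exact h
    rcases hhom x i hadj.symm with h | h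
    · by_cases h2 : closedNbhd G i ⊆ closedNbhd G x
      · exact hxv ((closed_mem_comm G).mp (h2 hji))
      · have hlt2 : ltT G (Quotient.mk (nbhdSetoid G) i) (Quotient.mk (nbhdSetoid G) x) :=
          ⟨h, h2⟩
        obtain ⟨c, hc, hcx⟩ := exists_cov_le G hlt2
        have hceq : c = Quotient.mk (nbhdSetoid G) j :=
          congrArg Subtype.val (huniq ⟨c, hc⟩)
        have : closedNbhd G x ⊆ closedNbhd G j := (leT_mk G).mp (hceq ▸ hcx)
        exact hxv (this (closed_mem_self G x))
    · exact hxv ((closed_mem_comm G).mp (h hji))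

end
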